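/- arXiv:2009.10785 — 6 statements merged into one kernel-verified Lean document; each statement's English description precedes it below -/
import Mathlib

section
/- Let D ⊆ ℂ be a domain and suppose there exist p ∈ ℂ and ε > 0 such that the open disc B(p,ε) is disjoint from D. Then for every k ∈ ℤ the weighted Bergman space A²_{w_k}(D), where w_k(z) = (1+|z|²)^{-(k+2)}, is infinite-dimensional over ℂ. (Witnesses are the functions z ↦ (z−p)^{k−m}, m = 0, 1, 2, …, which are holomorphic on D and lie in A²_{w_k}(D).) -/
open MeasureTheory

/-- The Bergman space of a set `D ⊆ ℂ` with weight `w`: holomorphic functions on `D`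
whose weighted squared modulus has finite integral over `D` w.r.t. Lebesgue measure. -/
def BergmanSet (D : Set ℂ) (w : ℂ → ℝ) : Set (ℂ → ℂ) :=
  {f | DifferentiableOn ℂ f D ∧ (∫⁻ z in D, ENNReal.ofReal (‖f z‖ ^ 2 * w z)) < ⊤}

/-- The Fubini–Study weight of level `k`: `w_k(z) = (1+|z|²)^(-(k+2))`. -/
noncomputable def fsWeight (k : ℤ) (z : ℂ) : ℝ :=
  (1 + ‖z‖ ^ 2) ^ (-(k + 2))

lemma key_bound (p : ℂ) (ε : ℝ) (hε : 0 < ε) (k : ℤ) (n : ℕ) (hn : 0 ≤ (n : ℤ) + k)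
    (z : ℂ) (hz : ε ≤ ‖z - p‖) :
    ‖((z - p)⁻¹) ^ n‖ ^ 2 * fsWeight k z ≤
      ((2 + 2 * ‖p‖ ^ 2) * (1 + ε⁻¹ ^ 2)) ^ n *
        (1 + ‖z‖ ^ 2) ^ (-2 : ℤ) := by
  set a := ‖z - p‖ with ha_def
  set r := ‖z‖ with hr_def
  set q := ‖p‖ with hq_def
  set B : ℝ := (2 + 2 * q ^ 2) * (1 + ε⁻¹ ^ 2) with hB_def
  have ha : 0 < a := lt_of_lt_of_le hε hz
  have hq : 0 ≤ q := norm_nonneg p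
  have hr : 0 ≤ r := norm_nonneg z
  have hs1 : (1 : ℝ) ≤ 1 + r ^ 2 := by nlinarith
  have hs0 : (0 : ℝ) < 1 + r ^ 2 := by linarith
  have htri : r ≤ a + q := by
    have := norm_add_le (z - p) p
    simpa [hr_def, ha_def, hq_def] using this
  have hea : 1 ≤ ε⁻¹ * a := by
    rw [← inv_mul_cancel₀ hε.ne']
    exact mul_le_mul_of_nonneg_left hz (by positivity)
  have hsB : 1 + r ^ 2 ≤ B * a ^ 2 := by
    have h1 : 1 ≤ (ε⁻¹ * a) ^ 2 := one_le_pow₀ hea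
    rw [hB_def]
    nlinarith [sq_nonneg (a - q), sq_nonneg (a + q), sq_nonneg r, mul_pos ha ha]
  have hnorm : ‖((z - p)⁻¹) ^ n‖ = (a ^ n)⁻¹ := by
    rw [norm_pow, norm_inv, inv_pow, ha_def]
  rw [hnorm, fsWeight, ← hr_def]
  have e1 : (1 + r ^ 2) ^ (-(k + 2)) =
      (1 + r ^ 2) ^ (n : ℤ) * (1 + r ^ 2) ^ (-(k + 2) - n) := by
    rw [← zpow_add₀ hs0.ne']
    congr 1
    ring
  have h3 : (1 + r ^ 2) ^ (n : ℤ) ≤ (B * a ^ 2) ^ n := by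
    rw [zpow_natCast]
    exact pow_le_pow_left₀ hs0.le hsB n
  have h4 : (1 + r ^ 2) ^ (-(k + 2) - n) ≤ (1 + r ^ 2) ^ (-2 : ℤ) :=
    zpow_le_zpow_right₀ hs1 (by omega)
  have hBpos : 0 < B := by positivity
  calc ((a ^ n)⁻¹) ^ 2 * (1 + r ^ 2) ^ (-(k + 2))
      = ((a ^ n)⁻¹) ^ 2 * ((1 + r ^ 2) ^ (n : ℤ) * (1 + r ^ 2) ^ (-(k + 2) - n)) := by
        rw [← e1]
    _ ≤ ((a ^ n)⁻¹) ^ 2 * ((B * a ^ 2) ^ n * (1 + r ^ 2) ^ (-2 : ℤ)) := by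
        have hz2 : (0:ℝ) ≤ (1 + r ^ 2) ^ (-(k + 2) - n) := by positivity
        have hz3 : (0:ℝ) ≤ (1 + r ^ 2) ^ (n : ℤ) := by positivity
        refine mul_le_mul_of_nonneg_left ?_ (by positivity)
        exact mul_le_mul h3 h4 hz2 (by positivity)
    _ = B ^ n * (1 + r ^ 2) ^ (-2 : ℤ) := by
        have han : a ^ n ≠ 0 := by positivity
        field_simp [mul_pow, ← pow_mul]
        ring

lemma bound_integrable (B : ℝ) :
    Integrable (fun z : ℂ => B * (1 + ‖z‖ ^ 2) ^ (-2 : ℤ)) := by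
  have h4 : ((Module.finrank ℝ ℂ : ℝ)) < 4 := by
    rw [Complex.finrank_real_complex]; norm_num
  have h := (integrable_rpow_neg_one_add_norm_sq (E := ℂ) (μ := volume) h4).const_mul B
  refine h.congr (Filter.Eventually.of_forall fun z => ?_)
  have : ((-4 : ℝ) / 2) = ((-2 : ℤ) : ℝ) := by norm_num
  show B * (1 + ‖z‖ ^ 2) ^ ((-4 : ℝ) / 2) = _
  rw [this, Real.rpow_intCast]

lemma mem_bergman (D : Set ℂ) (p : ℂ) (ε : ℝ) (hε : 0 < ε)
    (hdisj : Metric.ball p ε ∩ D = ∅) (k : ℤ) (n : ℕ) (hn : 0 ≤ (n : ℤ) + k) :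
    (fun z : ℂ => ((z - p)⁻¹) ^ n) ∈ BergmanSet D (fsWeight k) := by
  have hzD : ∀ z ∈ D, ε ≤ ‖z - p‖ := by
    intro z hzd
    by_contra hlt
    push_neg at hlt
    have : z ∈ Metric.ball p ε ∩ D := ⟨by rwa [Metric.mem_ball, Complex.dist_eq], hzd⟩
    simp [hdisj] at this
  constructor
  · intro z hzd
    have hzp : z - p ≠ 0 := by
      intro h
      have := hzD z hzd
      rw [h] at this
      simp at this
      linarith
    exact (((differentiableAt_id.sub (differentiableAt_const p)).inv hzp).pow n).differentiableWithinAt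
  · set B : ℝ := (2 + 2 * ‖p‖ ^ 2) * (1 + ε⁻¹ ^ 2) with hB
    calc (∫⁻ z in D, ENNReal.ofReal (‖((z - p)⁻¹) ^ n‖ ^ 2 * fsWeight k z))
        ≤ ∫⁻ z in D, ENNReal.ofReal (B ^ n * (1 + ‖z‖ ^ 2) ^ (-2 : ℤ)) := by
          refine setLIntegral_mono ?_ fun z hzd =>
            ENNReal.ofReal_le_ofReal (key_bound p ε hε k n hn z (hzD z hzd))
          have : Measurable fun z : ℂ => (1 + ‖z‖ ^ 2) ^ (-2 : ℤ) := by
            have : Measurable fun z : ℂ => ‖z‖ := continuous_norm.measurable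
            fun_prop
          fun_prop
      _ < ⊤ := ((bound_integrable (B ^ n)).integrableOn).setLIntegral_lt_top

lemma li_powers (D : Set ℂ) (hD : D.Infinite) (p : ℂ) :
    LinearIndependent ℂ (fun m : ℕ => fun z : D => ((z : ℂ) - p)⁻¹ ^ m) := by
  rw [linearIndependent_iff']
  intro s c hsum i hi
  set φ : ℂ → ℂ := fun z => (z - p)⁻¹ with hφ
  have hφinj : Function.Injective φ := by
    intro x y hxy
    have : x - p = y - p := inv_injective hxy
    exact sub_left_injective this
  set P : Polynomial ℂ := ∑ j ∈ s, Polynomial.C (c j) * Polynomial.X ^ j with hP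
  have hroot : ∀ z ∈ D, P.IsRoot (φ z) := by
    intro z hz
    have h0 := congrFun hsum ⟨z, hz⟩
    simp only [Finset.sum_apply, Pi.smul_apply, smul_eq_mul, Pi.zero_apply] at h0
    simp only [hP, Polynomial.IsRoot, Polynomial.eval_finset_sum, Polynomial.eval_mul,
      Polynomial.eval_C, Polynomial.eval_pow, Polynomial.eval_X]
    exact h0
  have hP0 : P = 0 := by
    refine Polynomial.eq_zero_of_infinite_isRoot P ?_
    refine Set.Infinite.mono ?_ (hD.image hφinj.injOn)
    rintro x ⟨z, hz, rfl⟩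
    exact hroot z hz
  have := congrArg (fun Q => Polynomial.coeff Q i) hP0
  simpa [hP, Polynomial.finset_sum_coeff, Polynomial.coeff_C_mul, Polynomial.coeff_X_pow,
    Finset.sum_ite_eq' s i, hi] using this

/-- If the complement of the domain `D ⊆ ℂ` contains an open disc `B(p,ε)`, then for
every `k ∈ ℤ` the weighted Bergman space `A²_{w_k}(D)` is infinite dimensional over `ℂ`. -/
theorem bergman_infinite_of_complement_has_interior (D : Set ℂ) (hDopen : IsOpen D)
    (hDconn : IsConnected D) (p : ℂ) (ε : ℝ) (hε : 0 < ε)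
    (hdisj : Metric.ball p ε ∩ D = ∅) (k : ℤ) :
    ¬ FiniteDimensional ℂ
      (Submodule.span ℂ (D.restrict '' BergmanSet D (fsWeight k)) : Submodule ℂ (D → ℂ)) := by
  intro hfd
  obtain ⟨z₀, hz₀⟩ := hDconn.nonempty
  have hDinf : D.Infinite := infinite_of_mem_nhds z₀ (hDopen.mem_nhds hz₀)
  have hzD : ∀ z ∈ D, z - p ≠ 0 := by
    intro z hzd h0
    have : z ∈ Metric.ball p ε ∩ D := by
      refine ⟨?_, hzd⟩
      rw [Metric.mem_ball, Complex.dist_eq, h0]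
      simpa using hε
    simp [hdisj] at this
  set t : ℕ := k.natAbs + 2 with ht
  set g : ℕ → ℂ → ℂ := fun m z => ((z - p)⁻¹) ^ (m + t) with hg
  have hgmem : ∀ m : ℕ, g m ∈ BergmanSet D (fsWeight k) := fun m =>
    mem_bergman D p ε hε hdisj k (m + t) (by simp only [ht]; omega)
  set N : Submodule ℂ (D → ℂ) :=
    Submodule.span ℂ (D.restrict '' BergmanSet D (fsWeight k)) with hN
  set h : ℕ → D → ℂ := fun m => D.restrict (g m) with hh
  have hmem : ∀ m : ℕ, h m ∈ N := fun m =>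
    Submodule.subset_span ⟨g m, hgmem m, rfl⟩
  -- linear independence of h
  set T : (D → ℂ) →ₗ[ℂ] (D → ℂ) :=
    { toFun := fun f z => ((z : ℂ) - p)⁻¹ ^ t * f z
      map_add' := by intro f f'; funext z; simp [mul_add]
      map_smul' := by intro a f; funext z; simp [smul_eq_mul]; ring } with hT
  have hc : ∀ z : D, ((z : ℂ) - p)⁻¹ ^ t ≠ 0 := fun z =>
    pow_ne_zero _ (inv_ne_zero (hzD z z.2))
  have hTker : LinearMap.ker T = ⊥ := by
    rw [LinearMap.ker_eq_bot]
    intro f f' hff'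
    funext z
    have := congrFun hff' z
    simp only [hT, LinearMap.coe_mk, AddHom.coe_mk] at this
    exact mul_left_cancel₀ (hc z) this
  have hli : LinearIndependent ℂ h := by
    have := (li_powers D hDinf p).map' T hTker
    have heq : (T ∘ fun m : ℕ => fun z : D => ((z : ℂ) - p)⁻¹ ^ m) = h := by
      funext m
      funext z
      simp only [Function.comp_apply, hT, LinearMap.coe_mk, AddHom.coe_mk, hh, hg,
        Set.restrict_apply, pow_add]
      show _ = (((z:ℂ) - p)⁻¹) ^ m * (((z:ℂ) - p)⁻¹) ^ t
      ring
    rwa [heq] at this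
  have hliN : LinearIndependent ℂ (fun m : ℕ => (⟨h m, hmem m⟩ : N)) := by
    refine LinearIndependent.of_comp N.subtype ?_
    exact hli
  exact Module.Finite.not_linearIndependent_of_infinite _ hliN
end

section
/- Let D ⊆ ℂ be a domain and k ∈ ℤ, and set w_k(z) = (1+|z|²)^{-(k+2)}. Suppose there exists a bounded holomorphic function g on D that is not constant, and suppose there exists f ∈ A²_{w_k}(D) that is not the restriction to D of a complex polynomial of degree at most k. Then A²_{w_k}(D) is infinite-dimensional over ℂ. -/
open MeasureTheory

/-- If `H^∞(D)` is nontrivial (there is a bounded nonconstant holomorphic function `g`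
on `D`) and `A²_{w_k}(D)` contains an element `f` that is not the restriction to `D`
of a polynomial of degree at most `k`, then `A²_{w_k}(D)` is infinite dimensional. -/
theorem bergman_infinite_of_bounded_nonconstant (D : Set ℂ) (hDopen : IsOpen D)
    (hDconn : IsConnected D) (k : ℤ)
    (g : ℂ → ℂ) (hg : DifferentiableOn ℂ g D) (hgbdd : ∃ C : ℝ, ∀ z ∈ D, ‖g z‖ ≤ C)
    (hgnc : ¬ ∃ c : ℂ, ∀ z ∈ D, g z = c)
    (f : ℂ → ℂ) (hf : f ∈ BergmanSet D (fsWeight k))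
    (hfnp : ¬ ∃ P : Polynomial ℂ, (∀ n : ℕ, k < (n : ℤ) → P.coeff n = 0) ∧
      ∀ z ∈ D, f z = P.eval z) :
    ¬ FiniteDimensional ℂ
      (Submodule.span ℂ (D.restrict '' BergmanSet D (fsWeight k)) : Submodule ℂ (D → ℂ)) := by
  intro hfin
  obtain ⟨C, hC⟩ := hgbdd
  obtain ⟨z₁, hz₁⟩ := hDconn.nonempty
  have hC0 : 0 ≤ C := le_trans (norm_nonneg _) (hC z₁ hz₁)
  have hwpos : ∀ z : ℂ, 0 < fsWeight k z := fun z =>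
    zpow_pos (by positivity) _
  -- f is not identically zero on D
  have hf0 : ∃ z₀ ∈ D, f z₀ ≠ 0 := by
    by_contra h
    push_neg at h
    exact hfnp ⟨0, fun n _ => by simp, fun z hz => by simp [h z hz]⟩
  -- key: if f · (P ∘ g) vanishes on D then P = 0
  have hkey : ∀ P : Polynomial ℂ, (∀ z ∈ D, f z * P.eval (g z) = 0) → P = 0 := by
    intro P hP
    by_contra hPne
    obtain ⟨z₀, hz₀D, hfz₀⟩ := hf0
    set c := g z₀ with hc
    have hroot : ∀ z ∈ D, f z ≠ 0 → g z ∈ P.roots.toFinset := by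
      intro z hz hfz
      rw [Multiset.mem_toFinset, Polynomial.mem_roots hPne]
      exact (mul_eq_zero.1 (hP z hz)).resolve_left hfz
    set T : Set ℂ := ↑(P.roots.toFinset.erase c) with hT
    have hTclosed : IsClosed T := (Finset.finite_toSet _).isClosed
    have hTc : c ∉ T := by simp [hT]
    have hgc : ContinuousAt g z₀ := hg.continuousOn.continuousAt (hDopen.mem_nhds hz₀D)
    have hfc : ContinuousAt f z₀ := hf.1.continuousOn.continuousAt (hDopen.mem_nhds hz₀D)
    have hev1 : ∀ᶠ z in nhds z₀, g z ∉ T := hgc (hTclosed.isOpen_compl.mem_nhds hTc)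
    have hev2 : ∀ᶠ z in nhds z₀, z ∈ D := hDopen.mem_nhds hz₀D
    have hev3 : ∀ᶠ z in nhds z₀, f z ≠ 0 := hfc.eventually_ne hfz₀
    have hev : g =ᶠ[nhds z₀] fun _ => c := by
      filter_upwards [hev1, hev2, hev3] with z h1 h2 h3
      have hz : g z ∈ P.roots.toFinset := hroot z h2 h3
      by_contra hne
      exact h1 (Finset.mem_coe.2 (Finset.mem_erase.2 ⟨hne, hz⟩))
    have hgan : AnalyticOnNhd ℂ g D := hg.analyticOnNhd hDopen
    have heq : Set.EqOn g (fun _ => c) D :=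
      hgan.eqOn_of_preconnected_of_eventuallyEq analyticOnNhd_const
        hDconn.isPreconnected hz₀D hev
    exact hgnc ⟨c, fun z hz => heq hz⟩
  -- each f·gⁿ is in the Bergman space
  have hmem : ∀ n : ℕ, (fun z => f z * g z ^ n) ∈ BergmanSet D (fsWeight k) := by
    intro n
    refine ⟨hf.1.mul (hg.pow n), ?_⟩
    have hpt : ∀ z ∈ D,
        ENNReal.ofReal (‖f z * g z ^ n‖ ^ 2 * fsWeight k z)
          ≤ ENNReal.ofReal ((C ^ n) ^ 2) * ENNReal.ofReal (‖f z‖ ^ 2 * fsWeight k z) := by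
      intro z hz
      rw [← ENNReal.ofReal_mul (by positivity)]
      apply ENNReal.ofReal_le_ofReal
      have h1 : ‖f z * g z ^ n‖ ^ 2 ≤ (C ^ n) ^ 2 * ‖f z‖ ^ 2 := by
        rw [norm_mul, norm_pow, mul_pow]
        have h2 : ‖g z‖ ^ n ≤ C ^ n := pow_le_pow_left₀ (norm_nonneg _) (hC z hz) n
        have h3 : (0:ℝ) ≤ ‖g z‖ ^ n := by positivity
        have h4 : (‖g z‖ ^ n) ^ 2 ≤ (C ^ n) ^ 2 := pow_le_pow_left₀ h3 h2 2
        nlinarith [sq_nonneg (‖f z‖)]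
      have := (hwpos z).le
      nlinarith
    calc ∫⁻ z in D, ENNReal.ofReal (‖f z * g z ^ n‖ ^ 2 * fsWeight k z)
        ≤ ∫⁻ z in D, ENNReal.ofReal ((C ^ n) ^ 2) * ENNReal.ofReal (‖f z‖ ^ 2 * fsWeight k z) := by
          refine lintegral_mono_ae ?_
          exact (ae_restrict_iff' hDopen.measurableSet).2 (ae_of_all _ hpt)
      _ = ENNReal.ofReal ((C ^ n) ^ 2) *
            ∫⁻ z in D, ENNReal.ofReal (‖f z‖ ^ 2 * fsWeight k z) :=
          lintegral_const_mul' _ _ ENNReal.ofReal_ne_top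
      _ < ⊤ := ENNReal.mul_lt_top ENNReal.ofReal_lt_top hf.2
  -- the restrictions of f·gⁿ are linearly independent
  have hli : LinearIndependent ℂ (fun n : ℕ => D.restrict (fun z => f z * g z ^ n)) := by
    rw [linearIndependent_iff']
    intro s cfun hsum i hi
    set P : Polynomial ℂ := ∑ j ∈ s, Polynomial.C (cfun j) * Polynomial.X ^ j with hPdef
    have hPz : ∀ z ∈ D, f z * P.eval (g z) = 0 := by
      intro z hz
      have h := congrFun hsum ⟨z, hz⟩
      simp only [Finset.sum_apply, Pi.smul_apply, Set.restrict_apply, smul_eq_mul,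
        Pi.zero_apply] at h
      rw [hPdef, Polynomial.eval_finset_sum, Finset.mul_sum]
      rw [← h]
      apply Finset.sum_congr rfl
      intro j _
      simp only [Polynomial.eval_mul, Polynomial.eval_C, Polynomial.eval_pow,
        Polynomial.eval_X]
      show _ = cfun j * (f z * g z ^ j)
      ring
    have hP0 : P = 0 := hkey P hPz
    have hco : P.coeff i = cfun i := by
      rw [hPdef, Polynomial.finset_sum_coeff]
      rw [Finset.sum_eq_single i]
      · simp
      · intro j _ hji
        simp [Polynomial.coeff_X_pow, Ne.symm hji]
      · intro h; exact absurd hi h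
    rw [hP0] at hco
    simpa using hco.symm
  -- lift to the span and contradict finite-dimensionality
  set p : Submodule ℂ (D → ℂ) := Submodule.span ℂ (D.restrict '' BergmanSet D (fsWeight k))
  have hmem' : ∀ n : ℕ, D.restrict (fun z => f z * g z ^ n) ∈ p :=
    fun n => Submodule.subset_span ⟨_, hmem n, rfl⟩
  have hli2 : LinearIndependent ℂ (fun n : ℕ =>
      (⟨D.restrict (fun z => f z * g z ^ n), hmem' n⟩ : p)) := by
    apply LinearIndependent.of_comp p.subtype
    exact hli
  exact Module.Finite.not_linearIndependent_of_infinite _ hli2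
end

section
/- Let D ⊆ ℂ be a domain and let f be holomorphic on D such that f is not the restriction to D of a rational function. Let z₀ ∈ D, let N be a positive integer, and let z₁, …, z_N ∈ D \ {z₀} be pairwise distinct points. For j = 1, …, N define g_j on D by g_j(z) = (f(z) − f(z_j))·(z − z₀)/(z − z_j) for z ≠ z_j, extended holomorphically across the removable singularity at z_j (with value f′(z_j)(z_j − z₀) there). Then g₁, …, g_N are linearly independent over ℂ. -/
open Filter Topology Polynomial Finset

/-- `f` is the restriction to `D` of a rational function: there are polynomials `p, q`
with `q` nonvanishing on `D` and `f = p/q` on `D`. -/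
def IsRationalRestriction (D : Set ℂ) (f : ℂ → ℂ) : Prop :=
  ∃ p q : Polynomial ℂ, (∀ z ∈ D, q.eval z ≠ 0) ∧ ∀ z ∈ D, f z = p.eval z / q.eval z

lemma vanish_of_vanish_off_finite {D S : Set ℂ} (hD : IsOpen D) (hS : S.Finite)
    {h : ℂ → ℂ} (hc : ContinuousOn h D) (h0 : ∀ z ∈ D, z ∉ S → h z = 0) :
    ∀ z ∈ D, h z = 0 := by
  intro z hz
  by_cases hzS : z ∈ S
  · have hne : (𝓝[D \ S] z).NeBot := by
      rw [nhdsWithin, Filter.neBot_iff]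
      intro hbot
      have hcompl : (D \ S)ᶜ ∈ 𝓝 z := Filter.inf_principal_eq_bot.mp hbot
      have hSnhds : S ∈ 𝓝 z := by
        filter_upwards [hcompl, hD.mem_nhds hz] with w hw hwD
        by_contra hwS
        exact hw ⟨hwD, hwS⟩
      exact (infinite_of_mem_nhds z hSnhds) hS
    have t1 : Tendsto h (𝓝[D \ S] z) (𝓝 (h z)) :=
      (hc z hz).mono Set.diff_subset
    have t2 : Tendsto h (𝓝[D \ S] z) (𝓝 0) := by
      have hev : ∀ᶠ w in 𝓝[D \ S] z, h w = 0 :=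
        eventually_nhdsWithin_of_forall (fun w hw => h0 w hw.1 hw.2)
      exact Tendsto.congr' (hev.mono fun w hw => hw.symm) tendsto_const_nhds
    exact tendsto_nhds_unique t1 t2
  · exact h0 z hz hzS

lemma ratRestriction_of_poly_mul {D : Set ℂ} (hD : IsOpen D) {f : ℂ → ℂ}
    (hf : ContinuousOn f D) :
    ∀ n : ℕ, ∀ q p : Polynomial ℂ, q.natDegree ≤ n → q ≠ 0 →
      (∀ z ∈ D, f z * q.eval z = p.eval z) → IsRationalRestriction D f := by
  intro n
  induction n with
  | zero =>
    intro q p hdeg hq heq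
    obtain ⟨c, rfl⟩ := Polynomial.natDegree_eq_zero.mp (Nat.le_zero.mp hdeg)
    have hc : c ≠ 0 := fun h => hq (by simp [h])
    exact ⟨p, C c, fun z _ => by simpa using hc,
      fun z hz => (eq_div_iff (by simpa using hc)).mpr (heq z hz)⟩
  | succ n ih =>
    intro q p hdeg hq heq
    by_cases hzero : ∀ z ∈ D, q.eval z ≠ 0
    · exact ⟨p, q, hzero, fun z hz => (eq_div_iff (hzero z hz)).mpr (heq z hz)⟩
    · push_neg at hzero
      obtain ⟨a, haD, ha⟩ := hzero
      obtain ⟨q₁, hq₁⟩ := (Polynomial.dvd_iff_isRoot.mpr ha : (X - C a) ∣ q)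
      have hpa : p.IsRoot a := by
        have := heq a haD
        simp [Polynomial.IsRoot, ← this, ha]
      obtain ⟨p₁, hp₁⟩ := Polynomial.dvd_iff_isRoot.mpr hpa
      have hq₁ne : q₁ ≠ 0 := fun h => hq (by simp [hq₁, h])
      have hXa : (X - C a : Polynomial ℂ) ≠ 0 := Polynomial.X_sub_C_ne_zero a
      have hdeg₁ : q₁.natDegree ≤ n := by
        have : q.natDegree = 1 + q₁.natDegree := by
          rw [hq₁, Polynomial.natDegree_mul hXa hq₁ne, Polynomial.natDegree_X_sub_C]
        omega
      have heq₁ : ∀ z ∈ D, f z * q₁.eval z = p₁.eval z := by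
        have hcont : ContinuousOn (fun z => f z * q₁.eval z - p₁.eval z) D :=
          ((hf.mul (Polynomial.continuous q₁).continuousOn).sub
            (Polynomial.continuous p₁).continuousOn)
        have hoff : ∀ z ∈ D, z ∉ ({a} : Set ℂ) → f z * q₁.eval z - p₁.eval z = 0 := by
          intro z hz hza
          have hza' : z - a ≠ 0 := sub_ne_zero.mpr (by simpa using hza)
          have := heq z hz
          rw [hq₁, hp₁] at this
          simp only [Polynomial.eval_mul, Polynomial.eval_sub, Polynomial.eval_X,
            Polynomial.eval_C] at this
          have : (z - a) * (f z * q₁.eval z) = (z - a) * p₁.eval z := by ring_nf; linear_combination this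
          have := mul_left_cancel₀ hza' this
          rw [this]; ring
        intro z hz
        have := vanish_of_vanish_off_finite hD (Set.finite_singleton a) hcont hoff z hz
        exact sub_eq_zero.mp this
      exact ih q₁ p₁ hdeg₁ hq₁ne heq₁

/-- Claim 2 in the proof of the main theorem: if `f` is holomorphic on the domain `D`
and not the restriction of a rational function, `z₀ ∈ D`, and `z₁, …, z_N ∈ D \ {z₀}`
are pairwise distinct, then the functions
`g_j(z) = (f(z) − f(z_j))(z − z₀)/(z − z_j)` (extended holomorphically across the
removable singularity at `z_j`, with value `f′(z_j)(z_j − z₀)` there) are linearly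
independent over `ℂ` as functions on `D`. -/
theorem gj_linearIndependent (D : Set ℂ) (hDopen : IsOpen D) (hDconn : IsConnected D)
    (f : ℂ → ℂ) (hf : DifferentiableOn ℂ f D) (hfrat : ¬ IsRationalRestriction D f)
    (z₀ : ℂ) (hz₀ : z₀ ∈ D) (N : ℕ) (hN : 0 < N)
    (zs : Fin N → ℂ) (hzsD : ∀ j, zs j ∈ D) (hzs₀ : ∀ j, zs j ≠ z₀)
    (hinj : Function.Injective zs)
    (g : Fin N → ℂ → ℂ) (hg : ∀ j, DifferentiableOn ℂ (g j) D)
    (hgeq : ∀ j, ∀ z ∈ D, z ≠ zs j → g j z = (f z - f (zs j)) * (z - z₀) / (z - zs j))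
    (hgval : ∀ j, g j (zs j) = deriv f (zs j) * (zs j - z₀)) :
    LinearIndependent ℂ (fun j : Fin N => D.restrict (g j)) := by
  rw [Fintype.linearIndependent_iff]
  intro c hc i
  by_contra hci
  -- the linear relation, pointwise on D
  have hsum : ∀ z ∈ D, ∑ j, c j * g j z = 0 := by
    intro z hz
    have := congrFun hc ⟨z, hz⟩
    simp [Finset.sum_apply] at this; exact this
  -- the polynomials
  set P : Fin N → Polynomial ℂ := fun j => ∏ k ∈ Finset.univ.erase j, (X - C (zs k)) with hP
  set q : Polynomial ℂ := ∑ j, C (c j) * P j with hqdef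
  set p : Polynomial ℂ := ∑ j, C (c j * f (zs j)) * P j with hpdef
  have hPeval : ∀ j z, (P j).eval z = ∏ k ∈ Finset.univ.erase j, (z - zs k) := by
    intro j z
    simp [hP, Polynomial.eval_prod]
  have hqeval : ∀ z, q.eval z = ∑ j, c j * ∏ k ∈ Finset.univ.erase j, (z - zs k) := by
    intro z
    simp [hqdef, Polynomial.eval_finset_sum, hPeval]
  have hpeval : ∀ z, p.eval z = ∑ j, c j * f (zs j) * ∏ k ∈ Finset.univ.erase j, (z - zs k) := by
    intro z
    simp [hpdef, Polynomial.eval_finset_sum, hPeval]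
  -- q is nonzero: its value at zs i is nonzero
  have hprodne : (∏ k ∈ Finset.univ.erase i, (zs i - zs k)) ≠ 0 := by
    refine Finset.prod_ne_zero_iff.mpr ?_
    intro k hk
    exact sub_ne_zero.mpr fun h => (Finset.mem_erase.mp hk).1 (hinj h).symm
  have hqzsi : q.eval (zs i) = c i * ∏ k ∈ Finset.univ.erase i, (zs i - zs k) := by
    rw [hqeval]
    rw [Finset.sum_eq_single i]
    · intro j _ hji
      exact mul_eq_zero_of_right _
        (Finset.prod_eq_zero (Finset.mem_erase.mpr ⟨Ne.symm hji, Finset.mem_univ i⟩) (sub_self _))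
    · intro h; exact absurd (Finset.mem_univ i) h
  have hqne : q ≠ 0 := by
    intro h
    rw [h] at hqzsi
    simp at hqzsi
    rcases hqzsi with h1 | h2
    · exact hci h1
    · exact hprodne h2
  -- the set of excluded points
  set S : Set ℂ := insert z₀ (Set.range zs) with hS
  have hSfin : S.Finite := (Set.finite_range zs).insert z₀
  -- f z * q z = p z off S
  have hoff : ∀ z ∈ D, z ∉ S → f z * q.eval z - p.eval z = 0 := by
    intro z hz hzS
    have hz₀ne : z - z₀ ≠ 0 := sub_ne_zero.mpr fun h => hzS (by rw [hS]; exact Set.mem_insert_iff.mpr (Or.inl h))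
    have hzsne : ∀ j, z - zs j ≠ 0 := fun j =>
      sub_ne_zero.mpr fun h => hzS (by rw [hS]; exact Set.mem_insert_iff.mpr (Or.inr ⟨j, h.symm⟩))
    have key : ∀ j, (f z - f (zs j)) * ∏ k ∈ Finset.univ.erase j, (z - zs k)
        = g j z * ((∏ k, (z - zs k)) / (z - z₀)) := by
      intro j
      have h1 : z - zs j ≠ 0 := hzsne j
      rw [hgeq j z hz (fun h => h1 (by rw [h, sub_self]))]
      rw [← Finset.mul_prod_erase Finset.univ _ (Finset.mem_univ j)]
      field_simp
    have expand : f z * q.eval z - p.eval z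
        = ∑ j, c j * ((f z - f (zs j)) * ∏ k ∈ Finset.univ.erase j, (z - zs k)) := by
      rw [hqeval, hpeval, Finset.mul_sum, ← Finset.sum_sub_distrib]
      congr 1; funext j; ring
    rw [expand]
    calc ∑ j, c j * ((f z - f (zs j)) * ∏ k ∈ Finset.univ.erase j, (z - zs k))
        = (∑ j, c j * g j z) * ((∏ k, (z - zs k)) / (z - z₀)) := by
          rw [Finset.sum_mul]; congr 1; funext j; rw [key j]; ring
      _ = 0 := by rw [hsum z hz, zero_mul]
  -- continuity, hence on all of D
  have hcont : ContinuousOn (fun z => f z * q.eval z - p.eval z) D :=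
    (hf.continuousOn.mul (Polynomial.continuous q).continuousOn).sub
      (Polynomial.continuous p).continuousOn
  have hall : ∀ z ∈ D, f z * q.eval z = p.eval z := by
    intro z hz
    exact sub_eq_zero.mp (vanish_of_vanish_off_finite hDopen hSfin hcont hoff z hz)
  exact hfrat (ratRestriction_of_poly_mul hDopen hf.continuousOn q.natDegree q p le_rfl hqne hall)
end

section
/- Let D ⊆ ℂ be a domain and let f be holomorphic on D such that f is not the restriction to D of a rational function. Let z₀ ∈ D, let N be a positive integer, let z₁, …, z_N ∈ D \ {z₀} be pairwise distinct, and define g_j on D by g_j(z) = (f(z) − f(z_j))·(z − z₀)/(z − z_j) (extended across the removable singularity at z_j). If λ = (λ₁, …, λ_N) ∈ ℂᴺ is such that the function g_λ = Σ_{j=1}^N λ_j g_j is the restriction to D of a rational function, then λ = 0. -/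
open Polynomial

/-- Two functions continuous on an open set that agree off a finite set agree everywhere. -/
lemma eqOn_of_eqOn_diff_finite {D : Set ℂ} (hD : IsOpen D) {u v : ℂ → ℂ}
    (hu : ContinuousOn u D) (hv : ContinuousOn v D) {S : Set ℂ} (hS : S.Finite)
    (h : ∀ z ∈ D \ S, u z = v z) : ∀ z ∈ D, u z = v z := by
  intro z hz
  have hUnh : D ∩ (S \ {z})ᶜ ∈ nhds z := by
    apply Filter.inter_mem (hD.mem_nhds hz)
    exact ((hS.subset Set.diff_subset).isClosed.isOpen_compl).mem_nhds (by simp)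
  have hsub : {z}ᶜ ∩ (D ∩ (S \ {z})ᶜ) ⊆ D \ S := by
    rintro w ⟨hw1, hw2, hw3⟩
    refine ⟨hw2, fun hwS => hw3 ⟨hwS, hw1⟩⟩
  have hNe : (nhdsWithin z (D \ S)).NeBot := by
    have : nhdsWithin z ({z}ᶜ) = nhdsWithin z ({z}ᶜ ∩ (D ∩ (S \ {z})ᶜ)) :=
      nhdsWithin_restrict' _ hUnh
    have h1 : (nhdsWithin z ({z}ᶜ ∩ (D ∩ (S \ {z})ᶜ))).NeBot := by
      rw [← this]; infer_instance
    exact h1.mono (nhdsWithin_mono z hsub)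
  have hu' : Filter.Tendsto u (nhdsWithin z (D \ S)) (nhds (u z)) :=
    (hu.continuousWithinAt hz).mono Set.diff_subset
  have hv' : Filter.Tendsto v (nhdsWithin z (D \ S)) (nhds (v z)) :=
    (hv.continuousWithinAt hz).mono Set.diff_subset
  have heq : Filter.Tendsto u (nhdsWithin z (D \ S)) (nhds (v z)) := by
    refine hv'.congr' ?_
    filter_upwards [self_mem_nhdsWithin] with w hw using (h w hw).symm
  exact tendsto_nhds_unique hu' heq

lemma ratRestriction_of_eq {D : Set ℂ} (hD : IsOpen D) {f : ℂ → ℂ}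
    (hf : ContinuousOn f D) {P Q : Polynomial ℂ} (hQ : Q ≠ 0) {S : Set ℂ} (hS : S.Finite)
    (h : ∀ z ∈ D \ S, f z * Q.eval z = P.eval z) : IsRationalRestriction D f := by
  classical
  set G : Polynomial ℂ := GCDMonoid.gcd P Q with hGdef
  have hG : G ≠ 0 := gcd_ne_zero_of_right hQ
  set P₁ : Polynomial ℂ := P / G
  set Q₁ : Polynomial ℂ := Q / G
  have hPP : G * P₁ = P := EuclideanDomain.mul_div_cancel' hG (gcd_dvd_left P Q)
  have hQQ : G * Q₁ = Q := EuclideanDomain.mul_div_cancel' hG (gcd_dvd_right P Q)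
  have hcop : IsCoprime P₁ Q₁ := isCoprime_div_gcd_div_gcd hQ
  have hQ₁ : Q₁ ≠ 0 := right_div_gcd_ne_zero hQ
  -- equation f * Q₁ = P₁ on D minus (S ∪ roots of G)
  have hS' : (S ∪ {x | G.IsRoot x}).Finite := hS.union (G.finite_setOf_isRoot hG)
  have key : ∀ z ∈ D, f z * Q₁.eval z = P₁.eval z := by
    apply eqOn_of_eqOn_diff_finite hD
      (hf.mul (Polynomial.continuous Q₁).continuousOn)
      (Polynomial.continuous P₁).continuousOn hS'
    intro z hz
    have hz1 : z ∈ D \ S := ⟨hz.1, fun hzS => hz.2 (Or.inl hzS)⟩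
    have hGz : G.eval z ≠ 0 := fun hr => hz.2 (Or.inr hr)
    have := h z hz1
    rw [← hPP, ← hQQ] at this
    simp only [eval_mul] at this
    have h2 : G.eval z * (f z * Q₁.eval z) = G.eval z * P₁.eval z := by
      linear_combination this
    exact mul_left_cancel₀ hGz h2
  -- Q₁ nonvanishing on D
  have hQ₁D : ∀ z ∈ D, Q₁.eval z ≠ 0 := by
    intro z hz hzz
    have hP₁z : P₁.eval z = 0 := by rw [← key z hz, hzz, mul_zero]
    obtain ⟨a, b, hab⟩ := hcop
    have : (a * P₁ + b * Q₁).eval z = 1 := by rw [hab]; simp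
    simp [eval_add, eval_mul, hP₁z, hzz] at this
  exact ⟨P₁, Q₁, hQ₁D, fun z hz => by
    rw [eq_div_iff (hQ₁D z hz)]; exact key z hz⟩


/-- Strengthened Claim 2 (used in Case III of the main theorem): with `f` holomorphic
on the domain `D`, not the restriction of a rational function, `z₀ ∈ D`,
`z₁, …, z_N ∈ D \ {z₀}` pairwise distinct, and
`g_j(z) = (f(z) − f(z_j))(z − z₀)/(z − z_j)` (extended across the removable
singularity at `z_j`): if `g_λ = Σ λ_j g_j` is the restriction to `D` of a rational
function, then `λ = 0`. -/
theorem glambda_rational_implies_zero (D : Set ℂ) (hDopen : IsOpen D)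
    (hDconn : IsConnected D)
    (f : ℂ → ℂ) (hf : DifferentiableOn ℂ f D) (hfrat : ¬ IsRationalRestriction D f)
    (z₀ : ℂ) (hz₀ : z₀ ∈ D) (N : ℕ) (hN : 0 < N)
    (zs : Fin N → ℂ) (hzsD : ∀ j, zs j ∈ D) (hzs₀ : ∀ j, zs j ≠ z₀)
    (hinj : Function.Injective zs)
    (g : Fin N → ℂ → ℂ) (hg : ∀ j, DifferentiableOn ℂ (g j) D)
    (hgeq : ∀ j, ∀ z ∈ D, z ≠ zs j → g j z = (f z - f (zs j)) * (z - z₀) / (z - zs j))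
    (lam : Fin N → ℂ)
    (hrat : IsRationalRestriction D (fun z => ∑ j : Fin N, lam j * g j z)) :
    lam = 0 := by
  classical
  by_contra hlam
  obtain ⟨j₀, hj₀⟩ : ∃ j, lam j ≠ 0 := by
    by_contra h
    push_neg at h
    exact hlam (funext fun j => h j)
  obtain ⟨p, q, hq, hpq⟩ := hrat
  set wj : Fin N → Polynomial ℂ := fun j => ∏ k ∈ Finset.univ.erase j, (X - C (zs k))
    with hwjdef
  set w : Polynomial ℂ := ∏ k, (X - C (zs k)) with hwdef
  set Spoly : Polynomial ℂ := ∑ j, C (lam j) * wj j with hSdef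
  set Tpoly : Polynomial ℂ := ∑ j, C (lam j * f (zs j)) * wj j with hTdef
  set Q : Polynomial ℂ := (X - C z₀) * Spoly * q with hQdef
  set P : Polynomial ℂ := p * w + (X - C z₀) * Tpoly * q with hPdef
  have hwj_eval : ∀ j z, (wj j).eval z = ∏ k ∈ Finset.univ.erase j, (z - zs k) := by
    intro j z; rw [hwjdef]; simp [eval_prod]
  have hw_eval : ∀ z, w.eval z = ∏ k, (z - zs k) := by
    intro z; rw [hwdef]; simp [eval_prod]
  have hS_eval : ∀ z, Spoly.eval z = ∑ j, lam j * (wj j).eval z := by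
    intro z; rw [hSdef]; simp [eval_finset_sum]
  have hT_eval : ∀ z, Tpoly.eval z = ∑ j, lam j * f (zs j) * (wj j).eval z := by
    intro z; rw [hTdef]; simp [eval_finset_sum, mul_assoc]
  have hQne : Q ≠ 0 := by
    have hSne : Spoly ≠ 0 := by
      intro h0
      have h1 : Spoly.eval (zs j₀) = 0 := by rw [h0]; simp
      rw [hS_eval] at h1
      have hvanish : ∀ k ∈ Finset.univ, k ≠ j₀ → lam k * eval (zs j₀) (wj k) = 0 := by
        intro k _ hk
        have hmem : (j₀ : Fin N) ∈ Finset.univ.erase k := by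
          simp [Finset.mem_erase, Ne.symm hk]
        rw [hwj_eval k (zs j₀)]
        have hzero : (∏ m ∈ Finset.univ.erase k, (zs j₀ - zs m)) = 0 :=
          Finset.prod_eq_zero hmem (sub_self (zs j₀))
        rw [hzero, mul_zero]
      rw [Finset.sum_eq_single j₀ hvanish (fun h => absurd (Finset.mem_univ j₀) h)] at h1
      rw [hwj_eval] at h1
      rcases mul_eq_zero.mp h1 with h2 | h2
      · exact hj₀ h2
      · obtain ⟨k, hk, hk0⟩ := Finset.prod_eq_zero_iff.mp h2
        exact (sub_ne_zero.mpr fun he => (Finset.mem_erase.mp hk).1 (hinj he.symm)) hk0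
    have hqne : q ≠ 0 := fun h0 => hq z₀ hz₀ (by rw [h0]; simp)
    rw [hQdef]
    exact mul_ne_zero (mul_ne_zero (X_sub_C_ne_zero z₀) hSne) hqne
  apply hfrat
  apply ratRestriction_of_eq (P := P) hDopen hf.continuousOn hQne (Set.finite_range zs)
  intro z hz
  obtain ⟨hzD, hzns⟩ := hz
  have hznot : ∀ j, z ≠ zs j := fun j hj => hzns ⟨j, hj.symm⟩
  have hqz : q.eval z ≠ 0 := hq z hzD
  have E1 : (∑ j, lam j * g j z) * q.eval z = p.eval z := by
    have h : (∑ j : Fin N, lam j * g j z) = p.eval z / q.eval z := hpq z hzD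
    rw [h]
    field_simp
  have E2 : (∑ j, lam j * g j z) * w.eval z
      = (z - z₀) * (f z * Spoly.eval z - Tpoly.eval z) := by
    have hterm : ∀ j ∈ Finset.univ, lam j * g j z * w.eval z
        = (z - z₀) * (f z * (lam j * (wj j).eval z)) -
          (z - z₀) * (lam j * f (zs j) * (wj j).eval z) := by
      intro j _
      have hzj : z - zs j ≠ 0 := sub_ne_zero.mpr (hznot j)
      have hwfac : w.eval z = (z - zs j) * (wj j).eval z := by
        rw [hw_eval z, hwj_eval j z, ← Finset.mul_prod_erase _ _ (Finset.mem_univ j)]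
      rw [hgeq j z hzD (hznot j), hwfac]
      field_simp
    rw [Finset.sum_mul, Finset.sum_congr rfl hterm, Finset.sum_sub_distrib]
    simp only [hS_eval, hT_eval, mul_sub, Finset.mul_sum]
  have hQz : Q.eval z = (z - z₀) * Spoly.eval z * q.eval z := by
    rw [hQdef]; simp
  have hPz : P.eval z = p.eval z * w.eval z + (z - z₀) * Tpoly.eval z * q.eval z := by
    rw [hPdef]; simp
  rw [hQz, hPz]
  linear_combination w.eval z * E1 - q.eval z * E2
end

section
/- Let D ⊆ ℂ be a domain, z₀ ∈ D, and let f be holomorphic on D, not the restriction to D of a rational function, and vanishing at z₀ to order exactly l ≥ 0 (i.e., f(z) = (z−z₀)^l h(z) near z₀ with h holomorphic and h(z₀) ≠ 0; the order is finite since f ≢ 0). Let N > l be a positive integer and z₁, …, z_N ∈ D \ {z₀} pairwise distinct, and define g_j on D by g_j(z) = (f(z) − f(z_j))·(z − z₀)/(z − z_j) (extended across the removable singularity at z_j). Then there exists λ = (λ₁, …, λ_N) ∈ ℂᴺ with λ ≠ 0 such that g_λ = Σ_{j=1}^N λ_j g_j vanishes at z₀ to order at least l + 1. -/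
open Metric Set

lemma iteratedDerivWithin_of_isOpen' {f : ℂ → ℂ} {s : Set ℂ} {x : ℂ} (n : ℕ)
    (hs : IsOpen s) (hx : x ∈ s) :
    iteratedDerivWithin n f s x = iteratedDeriv n f x := by
  simp only [iteratedDerivWithin, iteratedDeriv, iteratedFDerivWithin_of_isOpen n hs hx]

lemma iteratedDerivWithin_finsum {ι : Type*} (s : Finset ι) {n : ℕ} {D : Set ℂ} {x : ℂ}
    (hD : UniqueDiffOn ℂ D) (hx : x ∈ D) (F : ι → ℂ → ℂ)
    (hF : ∀ i ∈ s, ContDiffOn ℂ n (F i) D) :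
    iteratedDerivWithin n (fun z => ∑ i ∈ s, F i z) D x
      = ∑ i ∈ s, iteratedDerivWithin n (F i) D x := by
  classical
  induction s using Finset.induction_on with
  | empty =>
    simp only [Finset.sum_empty]
    simp [iteratedDerivWithin, iteratedFDerivWithin_zero_fun]
  | @insert a s hnot ih =>
    rw [Finset.sum_insert hnot]
    have h1 : ContDiffOn ℂ n (F a) D := hF a (Finset.mem_insert_self a s)
    have h2 : ContDiffOn ℂ n (fun z => ∑ i ∈ s, F i z) D := by
      apply ContDiffOn.sum
      intro i hi
      exact hF i (Finset.mem_insert_of_mem hi)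
    have : iteratedDerivWithin n (F a + fun z => ∑ i ∈ s, F i z) D x
        = iteratedDerivWithin n (F a) D x
          + iteratedDerivWithin n (fun z => ∑ i ∈ s, F i z) D x :=
      iteratedDerivWithin_add hx hD (h1 x hx) (h2 x hx)
    have heq : (fun z => F a z + ∑ i ∈ s, F i z) = (F a + fun z => ∑ i ∈ s, F i z) := rfl
    rw [show (fun z => ∑ i ∈ insert a s, F i z) = (F a + fun z => ∑ i ∈ s, F i z) by
      funext z; simp [Finset.sum_insert hnot], this,
      ih (fun i hi => hF i (Finset.mem_insert_of_mem hi))]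

/-- Key step of Case III in the proof of the main theorem: let `f` be holomorphic on
the domain `D`, not the restriction of a rational function, vanishing at `z₀ ∈ D` to
order exactly `l` (i.e. `f(z) = (z−z₀)^l h(z)` near `z₀` with `h` holomorphic,
`h(z₀) ≠ 0`).  For `N > l` pairwise distinct points `z₁, …, z_N ∈ D \ {z₀}` and
`g_j(z) = (f(z) − f(z_j))(z − z₀)/(z − z_j)` (extended across the removable
singularity at `z_j`), there is `λ ≠ 0` such that `g_λ = Σ λ_j g_j` vanishes at `z₀`
to order at least `l + 1`, i.e. its first `l + 1` Taylor coefficients at `z₀`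
vanish. -/
theorem exists_lambda_higher_vanishing (D : Set ℂ) (hDopen : IsOpen D)
    (hDconn : IsConnected D)
    (f : ℂ → ℂ) (hf : DifferentiableOn ℂ f D) (hfrat : ¬ IsRationalRestriction D f)
    (z₀ : ℂ) (hz₀ : z₀ ∈ D) (l : ℕ)
    (h : ℂ → ℂ) (ε : ℝ) (hε : 0 < ε) (hball : Metric.ball z₀ ε ⊆ D)
    (hh : DifferentiableOn ℂ h (Metric.ball z₀ ε))
    (hfact : ∀ z ∈ Metric.ball z₀ ε, f z = (z - z₀) ^ l * h z)
    (hh0 : h z₀ ≠ 0)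
    (N : ℕ) (hNl : l < N)
    (zs : Fin N → ℂ) (hzsD : ∀ j, zs j ∈ D) (hzs₀ : ∀ j, zs j ≠ z₀)
    (hinj : Function.Injective zs)
    (g : Fin N → ℂ → ℂ) (hg : ∀ j, DifferentiableOn ℂ (g j) D)
    (hgeq : ∀ j, ∀ z ∈ D, z ≠ zs j → g j z = (f z - f (zs j)) * (z - z₀) / (z - zs j)) :
    ∃ lam : Fin N → ℂ, lam ≠ 0 ∧
      ∀ m : ℕ, m ≤ l → iteratedDeriv m (fun z => ∑ j : Fin N, lam j * g j z) z₀ = 0 := by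
  classical
  have hD : UniqueDiffOn ℂ D := hDopen.uniqueDiffOn
  -- the matrix of the linear system
  set M : Matrix (Fin l) (Fin N) ℂ := fun m j => iteratedDeriv (m.1 + 1) (g j) z₀ with hM
  -- nontrivial kernel
  have hker : ∃ lam : Fin N → ℂ, lam ≠ 0 ∧ M.mulVec lam = 0 := by
    by_contra hcon
    push_neg at hcon
    have hinj' : Function.Injective M.mulVecLin := by
      rw [← LinearMap.ker_eq_bot, LinearMap.ker_eq_bot']
      intro v hv
      by_contra hv0
      exact hcon v hv0 hv
    have := LinearMap.finrank_le_finrank_of_injective hinj'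
    simp [Module.finrank_pi] at this
    omega
  obtain ⟨lam, hlam0, hlamker⟩ := hker
  refine ⟨lam, hlam0, ?_⟩
  -- each g j is C^∞ on D
  have hgc : ∀ (n : ℕ) (j : Fin N), ContDiffOn ℂ n (fun z => lam j * g j z) D := by
    intro n j
    exact ((hg j).contDiffOn hDopen).const_smul (lam j)
  have key : ∀ m : ℕ, iteratedDeriv m (fun z => ∑ j : Fin N, lam j * g j z) z₀
      = ∑ j : Fin N, lam j * iteratedDeriv m (g j) z₀ := by
    intro m
    rw [← iteratedDerivWithin_of_isOpen' m hDopen hz₀,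
      iteratedDerivWithin_finsum _ hD hz₀ _ (fun j _ => hgc m j)]
    congr 1
    funext j
    rw [iteratedDerivWithin_const_mul hz₀ hD _ ((hg j).contDiffOn hDopen z₀ hz₀),
      iteratedDerivWithin_of_isOpen' m hDopen hz₀]
  intro m hm
  rw [key m]
  match m with
  | 0 =>
    have : ∀ j : Fin N, g j z₀ = 0 := by
      intro j
      rw [hgeq j z₀ hz₀ (Ne.symm (hzs₀ j))]
      simp
    simp [this]
  | (k + 1) =>
    have hk : k < l := by omega
    have := congrFun hlamker ⟨k, hk⟩
    simpa [Matrix.mulVec, dotProduct, hM, mul_comm] using this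
end

section
/- Let k ∈ ℤ and let p, q be complex polynomials with q ≠ 0. Then ∫_{ℂ \ q⁻¹(0)} |p(z)/q(z)|² (1+|z|²)^{-(k+2)} dλ(z) < ∞ if and only if there exists a complex polynomial P with deg P ≤ k and p = P·q. In particular, a rational function lies in the weighted L² space over all of ℂ with weight (1+|z|²)^{-(k+2)} exactly when it is a polynomial of degree at most k. -/
open MeasureTheory

section Helpers

open Metric Polynomial Finset Module
open scoped ENNReal NNReal

/-- Key divergence lemma: if `f ≥ c/(b n)²` on annuli of radii `b n` around `z₀`
contained in `S`, with separated radii, then the lower integral over `S` is infinite. -/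
private lemma fsAux.key_div (z₀ : ℂ) (S : Set ℂ) (f : ℂ → ℝ) (c : ℝ) (hc : 0 < c) (b : ℕ → ℝ)
    (hb : ∀ n, 0 < b n)
    (hsep : ∀ m n, m < n → b m ≤ b n / 2 ∨ b n ≤ b m / 2)
    (hAS : ∀ n, ball z₀ (b n) \ ball z₀ (b n / 2) ⊆ S)
    (hf : ∀ n, ∀ z ∈ ball z₀ (b n) \ ball z₀ (b n / 2), c / (b n) ^ 2 ≤ f z) :
    ∫⁻ z in S, ENNReal.ofReal (f z) = ⊤ := by
  set A : ℕ → Set ℂ := fun n => ball z₀ (b n) \ ball z₀ (b n / 2) with hA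
  have hmeas : ∀ n, MeasurableSet (A n) := fun n =>
    measurableSet_ball.diff measurableSet_ball
  have hdisj : Pairwise (Function.onFun Disjoint A) := by
    have key : ∀ m n : ℕ, b m ≤ b n / 2 → Disjoint (A m) (A n) := by
      intro m n h
      rw [Set.disjoint_left]
      rintro z ⟨hz1, -⟩ ⟨-, hz2⟩
      exact hz2 (mem_ball.2 (lt_of_lt_of_le (mem_ball.1 hz1) h))
    intro m n hmn
    rcases hmn.lt_or_gt with h | h
    · rcases hsep m n h with h' | h'
      · exact key m n h'
      · exact (key n m h').symm
    · rcases hsep n m h with h' | h'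
      · exact (key n m h').symm
      · exact key m n h'
  have hvol : ∀ n, volume (A n) = ENNReal.ofReal ((3 / 4) * (b n) ^ 2 * Real.pi) := by
    intro n
    have hsub : ball z₀ (b n / 2) ⊆ ball z₀ (b n) :=
      ball_subset_ball (by linarith [hb n])
    rw [hA]
    rw [measure_diff hsub measurableSet_ball.nullMeasurableSet measure_ball_lt_top.ne,
      Complex.volume_ball, Complex.volume_ball]
    have e : ∀ r : ℝ, 0 ≤ r →
        (ENNReal.ofReal r ^ 2 * (NNReal.pi : ℝ≥0∞)) = ENNReal.ofReal (r ^ 2 * Real.pi) := by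
      intro r hr
      rw [← ENNReal.ofReal_pow hr, ← ENNReal.ofReal_coe_nnreal,
        ← ENNReal.ofReal_mul (by positivity)]
      norm_num
    rw [e _ (hb n).le, e _ (by linarith [hb n] : (0:ℝ) ≤ b n / 2),
      ← ENNReal.ofReal_sub _ (mul_nonneg (by positivity) Real.pi_pos.le)]
    congr 1
    ring
  have hterm : ∀ n, ENNReal.ofReal ((3 / 4) * c * Real.pi) ≤ ∫⁻ z in A n, ENNReal.ofReal (f z) := by
    intro n
    calc ENNReal.ofReal ((3 / 4) * c * Real.pi)
        = ENNReal.ofReal (c / (b n) ^ 2) * volume (A n) := by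
          rw [hvol n, ← ENNReal.ofReal_mul (by positivity)]
          congr 1
          have h0 : b n ≠ 0 := (hb n).ne'
          field_simp
      _ = ∫⁻ _ in A n, ENNReal.ofReal (c / (b n) ^ 2) := by
          rw [setLIntegral_const]
      _ ≤ ∫⁻ z in A n, ENNReal.ofReal (f z) := by
          exact setLIntegral_mono' (hmeas n)
            (fun z hz => ENNReal.ofReal_le_ofReal (hf n z hz))
  have h1 : (⊤ : ℝ≥0∞) ≤ ∫⁻ z in ⋃ n, A n, ENNReal.ofReal (f z) := by
    rw [lintegral_iUnion hmeas hdisj]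
    calc (⊤ : ℝ≥0∞) = ∑' _ : ℕ, ENNReal.ofReal ((3 / 4) * c * Real.pi) :=
          (ENNReal.tsum_const_eq_top_of_ne_zero (by positivity)).symm
      _ ≤ _ := ENNReal.tsum_le_tsum hterm
  have h2 : ∫⁻ z in ⋃ n, A n, ENNReal.ofReal (f z) ≤ ∫⁻ z in S, ENNReal.ofReal (f z) :=
    lintegral_mono_set (Set.iUnion_subset hAS)
  exact top_unique (le_trans h1 h2)

/-- uniform zpow lower bound on an interval -/
private lemma fsAux.zpow_min_le {x B : ℝ} (h1 : 1 ≤ x) (hB : x ≤ B) (m : ℤ) :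
    min (B ^ m) 1 ≤ x ^ m := by
  rcases le_or_gt 0 m with hm | hm
  · exact le_trans (min_le_right _ _) (one_le_zpow₀ h1 hm)
  · refine le_trans (min_le_left _ _) ?_
    obtain ⟨n, hn⟩ : ∃ n : ℕ, m = -(n : ℤ) := ⟨m.natAbs, by omega⟩
    have hx : 0 < x := lt_of_lt_of_le one_pos h1
    rw [hn, zpow_neg, zpow_neg, zpow_natCast, zpow_natCast]
    exact inv_anti₀ (pow_pos hx n) (pow_le_pow_left₀ hx.le hB n)

private lemma fsAux.zpow_min_pos {B : ℝ} (hB : 0 < B) (m : ℤ) : 0 < min (B ^ m) 1 :=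
  lt_min (zpow_pos hB m) one_pos

private lemma fsAux.one_le_one_add_sq (z : ℂ) : 1 ≤ 1 + ‖z‖ ^ 2 := by
  have := sq_nonneg (‖z‖); linarith

end Helpers

section Helpers2

open Metric Polynomial Finset Module
open scoped ENNReal NNReal

private lemma fsAux.fsWeight_pos (k : ℤ) (z : ℂ) : 0 < fsWeight k z :=
  zpow_pos (lt_of_lt_of_le one_pos (fsAux.one_le_one_add_sq z)) _

/-- lower bound for the weight on balls -/
private lemma fsAux.fsWeight_lower_ball (k : ℤ) (R : ℝ) :
    ∃ w : ℝ, 0 < w ∧ ∀ z : ℂ, ‖z‖ ≤ R → w ≤ fsWeight k z := by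
  refine ⟨min ((1 + R ^ 2) ^ (-(k + 2))) 1, ?_, ?_⟩
  · exact fsAux.zpow_min_pos (by positivity) _
  · intro z hz
    have h0 : (0:ℝ) ≤ R := le_trans (norm_nonneg z) hz
    have habs : ‖z‖ = ‖z‖ := rfl
    refine fsAux.zpow_min_le (fsAux.one_le_one_add_sq z) ?_ _
    have : ‖z‖ ^ 2 ≤ R ^ 2 := by
      rw [habs]; exact pow_le_pow_left₀ (norm_nonneg z) hz 2
    linarith

/-- lower bound for the weight at infinity -/
private lemma fsAux.fsWeight_lower_inf (k : ℤ) :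
    ∃ c : ℝ, 0 < c ∧ ∀ z : ℂ, 1 ≤ ‖z‖ →
      c * (‖z‖ ^ 2) ^ (-(k + 2)) ≤ fsWeight k z := by
  refine ⟨min ((2:ℝ) ^ (-(k + 2))) 1, fsAux.zpow_min_pos two_pos _, fun z hz => ?_⟩
  have habs : ‖z‖ = ‖z‖ := rfl
  have hx : (1:ℝ) ≤ ‖z‖ ^ 2 := one_le_pow₀ hz
  have hx0 : (0:ℝ) < ‖z‖ ^ 2 := by linarith
  have key : min ((2:ℝ) ^ (-(k + 2))) 1 * (‖z‖ ^ 2) ^ (-(k + 2))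
      ≤ ((1 + ‖z‖ ^ 2) / ‖z‖ ^ 2) ^ (-(k + 2)) * (‖z‖ ^ 2) ^ (-(k + 2)) := by
    refine mul_le_mul_of_nonneg_right ?_ (zpow_nonneg hx0.le _)
    refine fsAux.zpow_min_le ?_ ?_ _
    · rw [le_div_iff₀ hx0]; linarith
    · rw [div_le_iff₀ hx0]; linarith
  calc min ((2:ℝ) ^ (-(k + 2))) 1 * (‖z‖ ^ 2) ^ (-(k + 2))
      ≤ ((1 + ‖z‖ ^ 2) / ‖z‖ ^ 2) ^ (-(k + 2)) * (‖z‖ ^ 2) ^ (-(k + 2)) := key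
    _ = fsWeight k z := by
        rw [← mul_zpow, div_mul_cancel₀ _ hx0.ne', fsWeight, habs]

/-- polynomial upper bound -/
private lemma fsAux.poly_upper (P : Polynomial ℂ) :
    ∃ C : ℝ, 0 < C ∧ ∀ z : ℂ, ‖P.eval z‖ ≤ C * max 1 ‖z‖ ^ P.natDegree := by
  refine ⟨1 + ∑ i ∈ range (P.natDegree + 1), ‖P.coeff i‖, by positivity, fun z => ?_⟩
  have hm1 : (1:ℝ) ≤ max 1 ‖z‖ := le_max_left _ _
  have hm0 : ‖z‖ ≤ max 1 ‖z‖ := le_max_right _ _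
  calc ‖P.eval z‖ = ‖∑ i ∈ range (P.natDegree + 1), P.coeff i * z ^ i‖ := by
        rw [P.eval_eq_sum_range]
    _ ≤ ∑ i ∈ range (P.natDegree + 1), ‖P.coeff i * z ^ i‖ := norm_sum_le _ _
    _ ≤ ∑ i ∈ range (P.natDegree + 1), ‖P.coeff i‖ * max 1 ‖z‖ ^ P.natDegree := by
        refine sum_le_sum fun i hi => ?_
        rw [norm_mul, norm_pow]
        refine mul_le_mul_of_nonneg_left ?_ (norm_nonneg _)
        calc ‖z‖ ^ i ≤ max 1 ‖z‖ ^ i := pow_le_pow_left₀ (norm_nonneg z) hm0 i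
          _ ≤ max 1 ‖z‖ ^ P.natDegree :=
              pow_le_pow_right₀ hm1 (Nat.lt_succ_iff.mp (mem_range.1 hi))
    _ = (∑ i ∈ range (P.natDegree + 1), ‖P.coeff i‖) * max 1 ‖z‖ ^ P.natDegree := by
        rw [← sum_mul]
    _ ≤ (1 + ∑ i ∈ range (P.natDegree + 1), ‖P.coeff i‖) * max 1 ‖z‖ ^ P.natDegree := by
        have h := sum_nonneg (fun i (_ : i ∈ range (P.natDegree + 1)) => norm_nonneg (P.coeff i))
        exact mul_le_mul_of_nonneg_right (by linarith) (by positivity)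

/-- polynomial lower bound at infinity -/
private lemma fsAux.poly_lower (P : Polynomial ℂ) (hP : P ≠ 0) :
    ∃ c R : ℝ, 0 < c ∧ 1 ≤ R ∧ ∀ z : ℂ, R ≤ ‖z‖ →
      c * ‖z‖ ^ P.natDegree ≤ ‖P.eval z‖ := by
  set d := P.natDegree with hd
  set lc : ℝ := ‖P.coeff d‖ with hlc
  have hlc0 : 0 < lc := by
    rw [hlc]
    exact norm_pos_iff.mpr (by rw [hd]; exact Polynomial.leadingCoeff_ne_zero.mpr hP)
  set C₀ : ℝ := ∑ i ∈ range d, ‖P.coeff i‖ with hC₀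
  have hC₀0 : 0 ≤ C₀ := sum_nonneg fun i _ => norm_nonneg _
  refine ⟨lc / 2, max 1 ((2 * C₀ + 2) / lc), by positivity, le_max_left _ _, fun z hz => ?_⟩
  have hz1 : (1:ℝ) ≤ ‖z‖ := le_trans (le_max_left _ _) hz
  have hz0 : (0:ℝ) < ‖z‖ := lt_of_lt_of_le one_pos hz1
  have hzc : (2 * C₀ + 2) / lc ≤ ‖z‖ := le_trans (le_max_right _ _) hz
  have hsum : ‖∑ i ∈ range d, P.coeff i * z ^ i‖ ≤ C₀ * (‖z‖ ^ d / ‖z‖) := by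
    calc ‖∑ i ∈ range d, P.coeff i * z ^ i‖ ≤ ∑ i ∈ range d, ‖P.coeff i * z ^ i‖ :=
          norm_sum_le _ _
      _ ≤ ∑ i ∈ range d, ‖P.coeff i‖ * (‖z‖ ^ d / ‖z‖) := by
          refine sum_le_sum fun i hi => ?_
          rw [norm_mul, norm_pow]
          refine mul_le_mul_of_nonneg_left ?_ (norm_nonneg _)
          rw [le_div_iff₀ hz0, ← pow_succ]
          exact pow_le_pow_right₀ hz1 (mem_range.1 hi)
      _ = C₀ * (‖z‖ ^ d / ‖z‖) := by rw [← sum_mul]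
  have heval : P.eval z = (∑ i ∈ range d, P.coeff i * z ^ i) + P.coeff d * z ^ d := by
    rw [P.eval_eq_sum_range, hd, sum_range_succ]
  have htri : lc * ‖z‖ ^ d ≤ ‖P.eval z‖ + ‖∑ i ∈ range d, P.coeff i * z ^ i‖ := by
    have : ‖P.coeff d * z ^ d‖ ≤ ‖P.eval z‖ + ‖∑ i ∈ range d, P.coeff i * z ^ i‖ := by
      rw [heval]
      simpa using norm_sub_le ((∑ i ∈ range d, P.coeff i * z ^ i) + P.coeff d * z ^ d)
        (∑ i ∈ range d, P.coeff i * z ^ i)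
    rwa [norm_mul, norm_pow] at this
  have hkey : C₀ * (‖z‖ ^ d / ‖z‖) ≤ lc / 2 * ‖z‖ ^ d := by
    have h2 : 2 * C₀ + 2 ≤ ‖z‖ * lc := (div_le_iff₀ hlc0).mp hzc
    have h1 : C₀ / ‖z‖ ≤ lc / 2 := by
      rw [div_le_div_iff₀ hz0 two_pos]
      linarith
    calc C₀ * (‖z‖ ^ d / ‖z‖) = C₀ / ‖z‖ * ‖z‖ ^ d := by ring
      _ ≤ lc / 2 * ‖z‖ ^ d := mul_le_mul_of_nonneg_right h1 (pow_pos hz0 d).le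
  linarith

end Helpers2

open Metric Polynomial Finset in
open scoped ENNReal NNReal in
/-- A rational function `p/q` is square integrable over all of `ℂ` for the
Fubini–Study weight `w_k` if and only if it is a polynomial of degree at most `k`,
i.e. `p = P·q` for some polynomial `P` with `deg P ≤ k`. -/
theorem rational_L2_iff_polynomial_of_degree_le (k : ℤ) (p q : Polynomial ℂ) (hq : q ≠ 0) :
    (∫⁻ z in {z : ℂ | q.eval z ≠ 0},
        ENNReal.ofReal (‖p.eval z / q.eval z‖ ^ 2 * fsWeight k z)) < ⊤ ↔
      ∃ P : Polynomial ℂ, (∀ n : ℕ, k < (n : ℤ) → P.coeff n = 0) ∧ p = P * q := by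
  constructor
  · intro hfin
    by_cases hp0 : p = 0
    · exact ⟨0, fun n _ => rfl, by rw [hp0, zero_mul]⟩
    -- Step A : q ∣ p
    have hdvd : q ∣ p := by
      by_contra hnd
      set g := EuclideanDomain.gcd p q with hg
      have hg0 : g ≠ 0 := fun h => hq (EuclideanDomain.gcd_eq_zero_iff.mp h).2
      obtain ⟨p', hp'⟩ : g ∣ p := EuclideanDomain.gcd_dvd_left p q
      obtain ⟨q', hq'⟩ : g ∣ q := EuclideanDomain.gcd_dvd_right p q
      have hq'0 : q' ≠ 0 := by rintro rfl; rw [mul_zero] at hq'; exact hq hq'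
      obtain ⟨A, B, hAB⟩ : ∃ A B : Polynomial ℂ, g = p * A + q * B :=
        ⟨_, _, by rw [hg]; exact EuclideanDomain.gcd_eq_gcd_ab p q⟩
      have hbez : (1 : Polynomial ℂ) = p' * A + q' * B := by
        apply mul_left_cancel₀ hg0
        rw [mul_one]
        rw [hp', hq'] at hAB
        exact hAB.trans (by ring)
      have hq'nu : ¬ IsUnit q' := by
        intro hu
        obtain ⟨u, hu'⟩ := hu.exists_right_inv
        refine hnd ⟨u * p', ?_⟩
        rw [hp', hq']
        calc g * p' = g * (q' * u) * p' := by rw [hu', mul_one]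
          _ = g * q' * (u * p') := by ring
      obtain ⟨z₀, hz₀⟩ :=
        Complex.exists_root (Polynomial.degree_pos_of_ne_zero_of_nonunit hq'0 hq'nu)
      have hp'z₀ : p'.eval z₀ ≠ 0 := by
        intro h0
        have h1 := congrArg (Polynomial.eval z₀) hbez
        rw [Polynomial.eval_one, Polynomial.eval_add, Polynomial.eval_mul,
          Polynomial.eval_mul, h0, hz₀.eq_zero] at h1
        simp at h1
      obtain ⟨s, hs⟩ := (Polynomial.dvd_iff_isRoot).mpr hz₀
      obtain ⟨M₀, hM₀⟩ := (isCompact_closedBall z₀ 1).exists_bound_of_continuousOn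
        (s.continuousOn (s := closedBall z₀ 1))
      set M := max M₀ 1 with hM
      have hM1 : (0:ℝ) < M := lt_of_lt_of_le one_pos (le_max_right _ _)
      have hMb : ∀ z ∈ closedBall z₀ 1, ‖s.eval z‖ ≤ M :=
        fun z hz => le_trans (hM₀ z hz) (le_max_left _ _)
      obtain ⟨w₀, hw₀, hwb⟩ := fsAux.fsWeight_lower_ball k (‖z₀‖ + 1)
      set L := ‖p'.eval z₀‖ with hL
      have hL0 : 0 < L := norm_pos_iff.mpr hp'z₀
      obtain ⟨δ, hδ0, hδ⟩ : ∃ δ > 0, ∀ z : ℂ, dist z z₀ < δ → L / 2 ≤ ‖p'.eval z‖ := by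
        have hc : ContinuousAt (fun z : ℂ => ‖p'.eval z‖) z₀ := p'.continuousAt.norm
        obtain ⟨δ, hδ0, hδ⟩ := Metric.continuousAt_iff.mp hc (L / 2) (by positivity)
        refine ⟨δ, hδ0, fun z hz => ?_⟩
        have h2 := hδ hz
        rw [Real.dist_eq] at h2
        have h3 := abs_lt.mp h2
        linarith [h3.1]
      have hroots : {z : ℂ | q.IsRoot z}.Finite := q.finite_setOf_isRoot hq
      have hFc : IsClosed ({z : ℂ | q.IsRoot z} \ {z₀}) :=
        (hroots.subset Set.diff_subset).isClosed
      have hz₀F : z₀ ∈ ({z : ℂ | q.IsRoot z} \ {z₀})ᶜ := fun h => h.2 rfl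
      obtain ⟨ε₀, hε₀0, hε₀⟩ := Metric.isOpen_iff.mp hFc.isOpen_compl z₀ hz₀F
      set ε := min (min ε₀ δ) 1 with hε
      have hε0 : 0 < ε := lt_min (lt_min hε₀0 hδ0) one_pos
      have hεε₀ : ε ≤ ε₀ := le_trans (min_le_left _ _) (min_le_left _ _)
      have hεδ : ε ≤ δ := le_trans (min_le_left _ _) (min_le_right _ _)
      have hε1 : ε ≤ 1 := min_le_right _ _
      have hq_ne : ∀ z : ℂ, z ≠ z₀ → dist z z₀ < ε → q.eval z ≠ 0 := by
        intro z hzne hzd h0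
        have hmem : z ∈ ({z : ℂ | q.IsRoot z} \ {z₀})ᶜ :=
          hε₀ (mem_ball.mpr (lt_of_lt_of_le hzd hεε₀))
        exact hmem ⟨h0, by simpa using hzne⟩
      have hdiv := fsAux.key_div z₀ {z : ℂ | q.eval z ≠ 0}
        (fun z => ‖p.eval z / q.eval z‖ ^ 2 * fsWeight k z)
        ((L / 2) ^ 2 * w₀ / M ^ 2) (by positivity)
        (fun n => ε / 2 ^ n) (fun n => by positivity)
        (by
          intro m n hmn
          right
          show ε / 2 ^ n ≤ ε / 2 ^ m / 2
          rw [div_div, ← pow_succ]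
          exact div_le_div_of_nonneg_left hε0.le (by positivity)
            (pow_le_pow_right₀ one_le_two (by omega)))
        (by
          rintro n z ⟨hz1, hz2⟩
          rw [mem_ball] at hz1
          rw [mem_ball, not_lt] at hz2
          beta_reduce at hz1 hz2
          have h2n : (1:ℝ) ≤ 2 ^ n := one_le_pow₀ one_le_two
          have hD0 : 0 < dist z z₀ := lt_of_lt_of_le (by positivity) hz2
          have hzne : z ≠ z₀ := fun h => by simp [h] at hD0
          have hDε : dist z z₀ < ε := lt_of_lt_of_le hz1 (div_le_self hε0.le h2n)
          exact hq_ne z hzne hDε)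
        (by
          rintro n z ⟨hz1, hz2⟩
          rw [mem_ball] at hz1
          rw [mem_ball, not_lt] at hz2
          beta_reduce at hz1 hz2
          set bn := ε / 2 ^ n with hbn
          have h2n : (1:ℝ) ≤ 2 ^ n := one_le_pow₀ one_le_two
          have hbn0 : (0:ℝ) < bn := by positivity
          have hbnε : bn ≤ ε := div_le_self hε0.le h2n
          have hD0 : 0 < dist z z₀ := lt_of_lt_of_le (by positivity) hz2
          have hzne : z ≠ z₀ := fun h => by simp [h] at hD0
          have hDε : dist z z₀ < ε := lt_of_lt_of_le hz1 hbnε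
          have hqz : q.eval z ≠ 0 := hq_ne z hzne hDε
          have hqe : q.eval z = g.eval z * q'.eval z := by
            rw [hq', Polynomial.eval_mul]
          have hgz : g.eval z ≠ 0 := fun h => hqz (by rw [hqe, h, zero_mul])
          have hq'z : q'.eval z ≠ 0 := fun h => hqz (by rw [hqe, h, mul_zero])
          have hpq : p.eval z / q.eval z = p'.eval z / q'.eval z := by
            rw [hp', hqe, Polynomial.eval_mul, mul_div_mul_left _ _ hgz]
          have hq'b : ‖q'.eval z‖ ≤ M * bn := by
            have hqs : q'.eval z = (z - z₀) * s.eval z := by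
              rw [hs, Polynomial.eval_mul, Polynomial.eval_sub, Polynomial.eval_X,
                Polynomial.eval_C]
            have hzb : z ∈ closedBall z₀ 1 :=
              mem_closedBall.mpr (le_trans hDε.le hε1)
            calc ‖q'.eval z‖ = ‖z - z₀‖ * ‖s.eval z‖ := by rw [hqs, norm_mul]
              _ = dist z z₀ * ‖s.eval z‖ := by rw [dist_eq_norm]
              _ ≤ bn * M := mul_le_mul hz1.le (hMb z hzb) (norm_nonneg _) hbn0.le
              _ = M * bn := mul_comm _ _
          have hp'b : L / 2 ≤ ‖p'.eval z‖ := hδ z (lt_of_lt_of_le hDε hεδ)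
          have hnorm : (L / 2) / (M * bn) ≤ ‖p'.eval z / q'.eval z‖ := by
            rw [norm_div]
            exact div_le_div₀ (norm_nonneg _) hp'b (norm_pos_iff.mpr hq'z) hq'b
          have hsq : ((L / 2) / (M * bn)) ^ 2 ≤ ‖p'.eval z / q'.eval z‖ ^ 2 :=
            pow_le_pow_left₀ (by positivity) hnorm 2
          have hzn : ‖z‖ ≤ ‖z₀‖ + 1 := by
            have h4 : ‖z‖ - ‖z₀‖ ≤ ‖z - z₀‖ := norm_sub_norm_le _ _
            rw [← dist_eq_norm] at h4
            linarith [le_trans hDε.le hε1]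
          have hw : w₀ ≤ fsWeight k z := hwb z hzn
          calc (L / 2) ^ 2 * w₀ / M ^ 2 / bn ^ 2
              = ((L / 2) / (M * bn)) ^ 2 * w₀ := by
                field_simp
            _ ≤ ‖p'.eval z / q'.eval z‖ ^ 2 * fsWeight k z :=
                mul_le_mul hsq hw hw₀.le (by positivity)
            _ = ‖p.eval z / q.eval z‖ ^ 2 * fsWeight k z := by rw [hpq])
      rw [hdiv] at hfin
      exact lt_irrefl _ hfin
    -- Step B : degree bound
    obtain ⟨P, hP⟩ := hdvd
    refine ⟨P, ?_, by rw [hP, mul_comm]⟩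
    by_contra hcon
    push_neg at hcon
    obtain ⟨n, hkn, hcn⟩ := hcon
    have hP0 : P ≠ 0 := fun h => hcn (by rw [h]; simp)
    have hdk : k < (P.natDegree : ℤ) :=
      lt_of_lt_of_le hkn (Int.ofNat_le.mpr (Polynomial.le_natDegree_of_ne_zero hcn))
    obtain ⟨c₁, R₁, hc₁, hR₁, hlow⟩ := fsAux.poly_lower P hP0
    obtain ⟨c₂, hc₂, hinf⟩ := fsAux.fsWeight_lower_inf k
    have hroots : {z : ℂ | q.IsRoot z}.Finite := q.finite_setOf_isRoot hq
    obtain ⟨r, hr⟩ := hroots.isBounded.subset_closedBall (0 : ℂ)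
    set R := max (max R₁ r) 1 + 1 with hR
    have hR1 : (1:ℝ) ≤ R := by
      have := le_max_right (max R₁ r) (1:ℝ); linarith
    have hR0 : (0:ℝ) < R := lt_of_lt_of_le one_pos hR1
    have hRR₁ : R₁ ≤ R := by
      have h1 := le_max_left R₁ r
      have h2 := le_max_left (max R₁ r) (1:ℝ)
      linarith
    have hRr : r < R := by
      have h1 := le_max_right R₁ r
      have h2 := le_max_left (max R₁ r) (1:ℝ)
      linarith
    have hRq : ∀ z : ℂ, R ≤ ‖z‖ → q.eval z ≠ 0 := by
      intro z hz h0
      have : z ∈ closedBall (0:ℂ) r := hr h0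
      rw [mem_closedBall, dist_zero_right] at this
      linarith
    set d := P.natDegree with hd
    have hdiv := fsAux.key_div 0 {z : ℂ | q.eval z ≠ 0}
      (fun z => ‖p.eval z / q.eval z‖ ^ 2 * fsWeight k z)
      (c₁ ^ 2 * c₂) (by positivity)
      (fun n => R * 2 ^ (n + 1)) (fun n => by positivity)
      (by
        intro m n hmn
        left
        show R * 2 ^ (m + 1) ≤ R * 2 ^ (n + 1) / 2
        have h6 : (2:ℝ) ^ (m + 1) ≤ 2 ^ n :=
          pow_le_pow_right₀ one_le_two (by omega)
        rw [pow_succ (2:ℝ) n]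
        calc R * 2 ^ (m + 1) ≤ R * 2 ^ n := by nlinarith
          _ = R * (2 ^ n * 2) / 2 := by ring
      )
      (by
        rintro n z ⟨hz1, hz2⟩
        rw [mem_ball, not_lt, dist_zero_right] at hz2
        beta_reduce at hz2
        have h2n : (1:ℝ) ≤ 2 ^ n := one_le_pow₀ one_le_two
        have hzR : R ≤ ‖z‖ := by
          refine le_trans ?_ hz2
          rw [pow_succ]
          nlinarith
        exact hRq z hzR)
      (by
        rintro n z ⟨hz1, hz2⟩
        rw [mem_ball, dist_zero_right] at hz1
        rw [mem_ball, not_lt, dist_zero_right] at hz2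
        beta_reduce at hz1 hz2
        set bn := R * 2 ^ (n + 1) with hbn
        have h2n : (1:ℝ) ≤ 2 ^ n := one_le_pow₀ one_le_two
        have hzR : R ≤ ‖z‖ := by
          refine le_trans ?_ hz2
          rw [hbn, pow_succ]
          nlinarith
        have hz1' : (1:ℝ) ≤ ‖z‖ := le_trans hR1 hzR
        have hz0 : (0:ℝ) < ‖z‖ := lt_of_lt_of_le one_pos hz1'
        have hbn0 : (0:ℝ) < bn := by positivity
        have hqz : q.eval z ≠ 0 := hRq z hzR
        have heval : p.eval z / q.eval z = P.eval z := by
          rw [hP, Polynomial.eval_mul, mul_div_cancel_left₀ _ hqz]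
        have hPl : c₁ * ‖z‖ ^ d ≤ ‖P.eval z‖ := hlow z (le_trans hRR₁ hzR)
        have hPsq : c₁ ^ 2 * (‖z‖ ^ 2) ^ d ≤ ‖P.eval z‖ ^ 2 := by
          have h5 : (c₁ * ‖z‖ ^ d) ^ 2 ≤ ‖P.eval z‖ ^ 2 :=
            pow_le_pow_left₀ (by positivity) hPl 2
          calc c₁ ^ 2 * (‖z‖ ^ 2) ^ d = (c₁ * ‖z‖ ^ d) ^ 2 := by
                rw [mul_pow, ← pow_mul, ← pow_mul, Nat.mul_comm d 2]
            _ ≤ ‖P.eval z‖ ^ 2 := h5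
        have hwl : c₂ * (‖z‖ ^ 2) ^ (-(k + 2)) ≤ fsWeight k z := hinf z hz1'
        have ht1 : (1:ℝ) ≤ ‖z‖ ^ 2 := one_le_pow₀ hz1'
        have ht0 : (0:ℝ) < ‖z‖ ^ 2 := by linarith
        have hzp : ((‖z‖ ^ 2 : ℝ)) ^ (-(1:ℤ)) ≤ (‖z‖ ^ 2) ^ ((d:ℤ) + -(k + 2)) :=
          zpow_le_zpow_right₀ ht1 (by omega)
        calc c₁ ^ 2 * c₂ / bn ^ 2 ≤ c₁ ^ 2 * c₂ / ‖z‖ ^ 2 := by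
              apply div_le_div_of_nonneg_left (by positivity) (by positivity)
              exact pow_le_pow_left₀ hz0.le hz1.le 2
          _ = (c₁ ^ 2 * c₂) * (‖z‖ ^ 2) ^ (-(1:ℤ)) := by
              rw [zpow_neg, zpow_one]
              ring
          _ ≤ (c₁ ^ 2 * c₂) * (‖z‖ ^ 2) ^ ((d:ℤ) + -(k + 2)) :=
              mul_le_mul_of_nonneg_left hzp (by positivity)
          _ = (c₁ ^ 2 * (‖z‖ ^ 2) ^ d) * (c₂ * (‖z‖ ^ 2) ^ (-(k + 2))) := by
              rw [zpow_add₀ ht0.ne', zpow_natCast]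
              ring
          _ ≤ ‖P.eval z‖ ^ 2 * fsWeight k z := by
              refine mul_le_mul hPsq hwl (by positivity) (by positivity)
          _ = ‖p.eval z / q.eval z‖ ^ 2 * fsWeight k z := by rw [heval])
    rw [hdiv] at hfin
    exact lt_irrefl _ hfin
  · rintro ⟨P, hdeg, rfl⟩
    by_cases hP0 : P = 0
    · rw [hP0]
      simp only [zero_mul, Polynomial.eval_zero, zero_div, norm_zero]
      norm_num
    set S : Set ℂ := {z : ℂ | q.eval z ≠ 0} with hSdef
    have hd : (P.natDegree : ℤ) ≤ k := by
      by_contra h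
      push_neg at h
      exact Polynomial.leadingCoeff_ne_zero.mpr hP0 (hdeg _ h)
    obtain ⟨C, hC, hCb⟩ := fsAux.poly_upper P
    have hSm : MeasurableSet S :=
      (measurableSet_eq_fun (Polynomial.continuous q).measurable measurable_const).compl
    have hpt : ∀ z ∈ S, ‖(P * q).eval z / q.eval z‖ ^ 2 * fsWeight k z
        ≤ (4 * C ^ 2) * (1 + ‖z‖) ^ (-(3:ℝ)) := by
      intro z hz
      have hqz : q.eval z ≠ 0 := hz
      have hev : (P * q).eval z / q.eval z = P.eval z := by
        rw [Polynomial.eval_mul, mul_div_assoc, div_self hqz, mul_one]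
      rw [hev]
      have habs : ‖z‖ = ‖z‖ := rfl
      set x : ℝ := ‖z‖ ^ 2 with hx
      have hx0 : (0:ℝ) ≤ x := sq_nonneg _
      have h1x : (1:ℝ) ≤ 1 + x := by linarith
      have h1x0 : (0:ℝ) < 1 + x := by linarith
      have hstep1 : ‖P.eval z‖ ^ 2 ≤ C ^ 2 * (1 + x) ^ P.natDegree := by
        have h1 : ‖P.eval z‖ ^ 2 ≤ (C * max 1 ‖z‖ ^ P.natDegree) ^ 2 :=
          pow_le_pow_left₀ (norm_nonneg _) (hCb z) 2
        have h2 : (max 1 ‖z‖) ^ 2 ≤ 1 + x := by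
          rcases max_cases (1:ℝ) ‖z‖ with ⟨hm, _⟩ | ⟨hm, _⟩ <;> rw [hm] <;>
            nlinarith [norm_nonneg z]
        calc ‖P.eval z‖ ^ 2 ≤ (C * max 1 ‖z‖ ^ P.natDegree) ^ 2 := h1
          _ = C ^ 2 * ((max 1 ‖z‖) ^ 2) ^ P.natDegree := by ring
          _ ≤ C ^ 2 * (1 + x) ^ P.natDegree :=
              mul_le_mul_of_nonneg_left (pow_le_pow_left₀ (by positivity) h2 _) (by positivity)
      have hstep2 : (1 + x) ^ P.natDegree * fsWeight k z ≤ ((1 + x) ^ 2)⁻¹ := by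
        rw [fsWeight, habs, ← hx]
        rw [← zpow_natCast (1 + x) P.natDegree, ← zpow_add₀ h1x0.ne']
        calc (1 + x) ^ ((P.natDegree : ℤ) + -(k + 2)) ≤ (1 + x) ^ (-2 : ℤ) :=
              zpow_le_zpow_right₀ h1x (by omega)
          _ = ((1 + x) ^ 2)⁻¹ := by
              rw [zpow_neg, zpow_two, sq]
      have hstep3 : ((1 + x) ^ 2)⁻¹ ≤ 4 * (1 + ‖z‖) ^ (-(3:ℝ)) := by
        have ht0 : (0:ℝ) ≤ ‖z‖ := norm_nonneg z
        have h3 : (1 + ‖z‖) ^ (3:ℕ) ≤ 4 * (1 + x) ^ 2 := by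
          rw [hx]
          nlinarith [sq_nonneg (‖z‖ - 1), sq_nonneg (‖z‖ * (‖z‖ - 1)), sq_nonneg ‖z‖]
        have hp3 : (0:ℝ) < (1 + ‖z‖) ^ (3:ℕ) := by positivity
        rw [Real.rpow_neg (by linarith), show (3:ℝ) = ((3:ℕ):ℝ) by norm_num,
          Real.rpow_natCast]
        calc ((1 + x) ^ 2)⁻¹ = 4 * (4 * (1 + x) ^ 2)⁻¹ := by
              rw [mul_inv, ← mul_assoc]; norm_num
          _ ≤ 4 * ((1 + ‖z‖) ^ (3:ℕ))⁻¹ :=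
              mul_le_mul_of_nonneg_left (inv_anti₀ hp3 h3) (by norm_num)
      have hw0 : (0:ℝ) < fsWeight k z := fsAux.fsWeight_pos k z
      calc ‖P.eval z‖ ^ 2 * fsWeight k z
          ≤ (C ^ 2 * (1 + x) ^ P.natDegree) * fsWeight k z :=
            mul_le_mul_of_nonneg_right hstep1 hw0.le
        _ = C ^ 2 * ((1 + x) ^ P.natDegree * fsWeight k z) := by ring
        _ ≤ C ^ 2 * ((1 + x) ^ 2)⁻¹ := mul_le_mul_of_nonneg_left hstep2 (by positivity)
        _ ≤ C ^ 2 * (4 * (1 + ‖z‖) ^ (-(3:ℝ))) :=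
            mul_le_mul_of_nonneg_left hstep3 (by positivity)
        _ = 4 * C ^ 2 * (1 + ‖z‖) ^ (-(3:ℝ)) := by ring
    calc (∫⁻ z in S, ENNReal.ofReal (‖(P * q).eval z / q.eval z‖ ^ 2 * fsWeight k z))
        ≤ ∫⁻ z in S, ENNReal.ofReal ((4 * C ^ 2) * (1 + ‖z‖) ^ (-(3:ℝ))) :=
          setLIntegral_mono' hSm fun z hz => ENNReal.ofReal_le_ofReal (hpt z hz)
      _ ≤ ∫⁻ z : ℂ, ENNReal.ofReal ((4 * C ^ 2) * (1 + ‖z‖) ^ (-(3:ℝ))) :=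
          setLIntegral_le_lintegral _ _
      _ = ENNReal.ofReal (4 * C ^ 2) * ∫⁻ z : ℂ, ENNReal.ofReal ((1 + ‖z‖) ^ (-(3:ℝ))) := by
          simp_rw [ENNReal.ofReal_mul (by positivity : (0:ℝ) ≤ 4 * C ^ 2)]
          exact lintegral_const_mul' _ _ ENNReal.ofReal_ne_top
      _ < ⊤ := ENNReal.mul_lt_top ENNReal.ofReal_lt_top
          (finite_integral_one_add_norm (by rw [Complex.finrank_real_complex]; norm_num))
end
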